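/- The real inequality (1+δ)·log(1+δ) − δ ≥ δ²/(|δ| + 2) holds for all δ ≥ −1 (with the convention 0·log 0 = 0 at δ = −1). -/

import Mathlib

private lemma hdA (x : ℝ) (hx : -1 < x) :
    HasDerivAt (fun y : ℝ => Real.log (1+y) - 2*y/(2+y))
      (1/(1+x) - 4/(2+x)^2) x := by
  have h1 : HasDerivAt (fun y : ℝ => 1 + y) 1 x := (hasDerivAt_id x).const_add 1
  have h2 : HasDerivAt (fun y : ℝ => Real.log (1+y)) (1/(1+x)) x := by
    have := (Real.hasDerivAt_log (by linarith : (1:ℝ)+x ≠ 0)).comp x h1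
    exact this.congr_deriv (by simp)
  have h3 : HasDerivAt (fun y : ℝ => 2*y) 2 x := by
    simpa using (hasDerivAt_id x).const_mul 2
  have h4 : HasDerivAt (fun y : ℝ => 2+y) 1 x := (hasDerivAt_id x).const_add 2
  have h5 : HasDerivAt (fun y : ℝ => 2*y/(2+y)) ((2*(2+x) - 2*x*1)/(2+x)^2) x :=
    h3.div h4 (by linarith)
  have h6 := h2.sub h5
  refine h6.congr_deriv ?_
  have : (2:ℝ)+x ≠ 0 := by linarith
  ring

private lemma logA (x : ℝ) (hx : 0 ≤ x) : 2*x/(2+x) ≤ Real.log (1+x) := by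
  have key : MonotoneOn (fun y : ℝ => Real.log (1+y) - 2*y/(2+y)) (Set.Ici 0) := by
    apply monotoneOn_of_deriv_nonneg (convex_Ici 0)
    · intro y hy
      exact ((hdA y (by simp at hy; linarith)).differentiableAt).continuousAt.continuousWithinAt
    · intro y hy
      rw [interior_Ici] at hy
      exact ((hdA y (by exact lt_trans (by norm_num) hy)).differentiableAt).differentiableWithinAt
    · intro y hy
      rw [interior_Ici] at hy
      have hy' : (0:ℝ) < y := hy
      rw [(hdA y (by linarith)).deriv]
      rw [sub_nonneg, div_le_div_iff₀ (by positivity) (by positivity)]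
      nlinarith
  have h0 : (fun y : ℝ => Real.log (1+y) - 2*y/(2+y)) 0 = 0 := by norm_num
  have := key (Set.self_mem_Ici) (Set.mem_Ici.mpr hx) hx
  rw [h0] at this
  simpa [sub_nonneg] using this

private lemma hdB (x : ℝ) (hx : -1 < x) :
    HasDerivAt (fun y : ℝ => (1+y) * Real.log (1+y) - y - y^2/2)
      (Real.log (1+x) - x) x := by
  have h1 : HasDerivAt (fun y : ℝ => 1 + y) 1 x := (hasDerivAt_id x).const_add 1
  have h2 : HasDerivAt (fun y : ℝ => Real.log (1+y)) (1/(1+x)) x := by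
    have := (Real.hasDerivAt_log (by linarith : (1:ℝ)+x ≠ 0)).comp x h1
    exact this.congr_deriv (by simp)
  have h3 : HasDerivAt (fun y : ℝ => (1+y) * Real.log (1+y))
      (1 * Real.log (1+x) + (1+x) * (1/(1+x))) x := h1.mul h2
  have h4 : HasDerivAt (fun y : ℝ => y^2/2) x x := by
    have := ((hasDerivAt_pow 2 x).div_const 2)
    simpa using this
  have h5 := (h3.sub (hasDerivAt_id x)).sub h4
  refine h5.congr_deriv ?_
  have : (1:ℝ)+x ≠ 0 := by linarith
  rw [one_mul, mul_one_div_cancel this]; ring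

private lemma logB (x : ℝ) (hx : -1 < x) (hx0 : x ≤ 0) :
    x^2/2 ≤ (1+x) * Real.log (1+x) - x := by
  have key : AntitoneOn (fun y : ℝ => (1+y) * Real.log (1+y) - y - y^2/2) (Set.Ioc (-1) 0) := by
    apply antitoneOn_of_deriv_nonpos (convex_Ioc (-1) 0)
    · intro y hy
      exact ((hdB y hy.1).differentiableAt).continuousAt.continuousWithinAt
    · intro y hy
      rw [interior_Ioc] at hy
      exact ((hdB y hy.1).differentiableAt).differentiableWithinAt
    · intro y hy
      rw [interior_Ioc] at hy
      rw [(hdB y hy.1).deriv]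
      obtain ⟨hy1, hy2⟩ := hy
      have := Real.log_le_sub_one_of_pos (by linarith : (0:ℝ) < 1 + y)
      linarith
  have hmem : x ∈ Set.Ioc (-1 : ℝ) 0 := ⟨hx, hx0⟩
  have h0 : (0:ℝ) ∈ Set.Ioc (-1 : ℝ) 0 := by norm_num
  have := key hmem h0 hx0
  simp only [add_zero, Real.log_one, mul_zero, mul_one, sub_zero, zero_sub] at this
  norm_num at this
  linarith

theorem stmt7 (δ : ℝ) (h : -1 ≤ δ) :
    δ ^ 2 / (|δ| + 2) ≤ (1 + δ) * Real.log (1 + δ) - δ := by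
  rcases le_or_gt 0 δ with hd | hd
  · -- δ ≥ 0
    rw [abs_of_nonneg hd]
    have hlog := logA δ hd
    have h1 : (0:ℝ) ≤ 1 + δ := by linarith
    have h2 : (0:ℝ) < δ + 2 := by linarith
    have h3 : (1+δ) * (2*δ/(2+δ)) ≤ (1+δ) * Real.log (1+δ) :=
      mul_le_mul_of_nonneg_left hlog h1
    have h4 : δ^2 / (δ + 2) = (1+δ) * (2*δ/(2+δ)) - δ := by
      field_simp
      ring
    linarith
  · -- δ < 0
    rw [abs_of_neg hd]
    rcases eq_or_lt_of_le h with heq | hlt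
    · rw [← heq]
      simp [Real.log_zero]
      norm_num
    · have hB := logB δ hlt (le_of_lt hd)
      have h1 : δ^2 / (-δ + 2) ≤ δ^2 / 2 := by
        apply div_le_div_of_nonneg_left (by positivity) (by norm_num) (by linarith)
      linarith
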